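/- Let A be an n×n positive definite matrix, T = det(A)·A^{-1}, L ⊆ 𝕂ⁿ a subspace with dim(L^⊥) = 1, x ∈ L^⊥, and M = √T(L). Then ‖P_{M^⊥}√T x‖² = (det(A)/⟨x, Ax⟩)·‖x‖⁴, where P_{M^⊥} is the orthogonal projection onto M^⊥. -/

import Mathlib

open scoped ComplexOrder InnerProductSpace

/-- Let `A` be an `n × n` positive definite matrix over `𝕜`, `T = det(A) • A⁻¹` (also positive
definite), `L ⊆ 𝕜ⁿ` a subspace with one-dimensional orthogonal complement, `x ∈ L^⊥`, and
`M = √T (L)`.  Then `‖P_{M^⊥} √T x‖² = (det A / ⟨x, Ax⟩) · ‖x‖⁴`. -/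
theorem stmt_10 {𝕜 : Type*} [RCLike 𝕜] {n : ℕ}
    (A : Matrix (Fin n) (Fin n) 𝕜) (hA : A.PosDef)
    (hT : (A.det • A⁻¹).PosDef)
    (L : Submodule 𝕜 (EuclideanSpace 𝕜 (Fin n)))
    (hL : Module.finrank 𝕜 (Lᗮ : Submodule 𝕜 (EuclideanSpace 𝕜 (Fin n))) = 1)
    (x : EuclideanSpace 𝕜 (Fin n)) (hx : x ∈ Lᗮ) :
    let Slin := Matrix.toEuclideanLin
      ((hT.posSemidef.1.eigenvectorUnitary : Matrix (Fin n) (Fin n) 𝕜) *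
        Matrix.diagonal ((↑) ∘ (√·) ∘ hT.posSemidef.1.eigenvalues) *
        (star hT.posSemidef.1.eigenvectorUnitary : Matrix (Fin n) (Fin n) 𝕜))
    let M : Submodule 𝕜 (EuclideanSpace 𝕜 (Fin n)) := L.map Slin
    (‖(Submodule.orthogonalProjectionOnto Mᗮ (Slin x) : EuclideanSpace 𝕜 (Fin n))‖ ^ 2 : 𝕜) =
      A.det / ⟪x, Matrix.toEuclideanLin A x⟫_𝕜 * (‖x‖ ^ 4 : ℝ) := by
  intro Slin M
  by_cases hx0 : x = 0
  · subst hx0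
    simp
  classical
  have hSlin : Slin = Matrix.toEuclideanLin ((hT.posSemidef.1.eigenvectorUnitary : Matrix (Fin n) (Fin n) 𝕜) *
        Matrix.diagonal ((↑) ∘ (√·) ∘ hT.posSemidef.1.eigenvalues) *
        (star hT.posSemidef.1.eigenvectorUnitary : Matrix (Fin n) (Fin n) 𝕜)) := rfl
  have hM : M = L.map Slin := rfl
  set B := ((hT.posSemidef.1.eigenvectorUnitary : Matrix (Fin n) (Fin n) 𝕜) *
        Matrix.diagonal ((↑) ∘ (√·) ∘ hT.posSemidef.1.eigenvalues) *
        (star hT.posSemidef.1.eigenvectorUnitary : Matrix (Fin n) (Fin n) 𝕜)) with hBdef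
  have hD : (Matrix.diagonal ((↑) ∘ (√·) ∘ hT.posSemidef.1.eigenvalues) :
      Matrix (Fin n) (Fin n) 𝕜).IsHermitian := by
    rw [Matrix.IsHermitian, Matrix.diagonal_conjTranspose]
    congr 1
    funext i
    simp
  have hBherm : B.IsHermitian := by
    rw [hBdef]
    exact Matrix.isHermitian_mul_mul_conjTranspose _ hD
  have hBB : B * B = A.det • A⁻¹ := by
    have hUU := Unitary.coe_star_mul_self hT.posSemidef.1.eigenvectorUnitary
    have hDD : (Matrix.diagonal ((↑) ∘ (√·) ∘ hT.posSemidef.1.eigenvalues) :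
        Matrix (Fin n) (Fin n) 𝕜) * Matrix.diagonal ((↑) ∘ (√·) ∘ hT.posSemidef.1.eigenvalues)
        = Matrix.diagonal (RCLike.ofReal ∘ hT.posSemidef.1.eigenvalues) := by
      rw [Matrix.diagonal_mul_diagonal]
      congr 1
      funext i
      simp [← RCLike.ofReal_mul, Real.mul_self_sqrt (hT.posSemidef.eigenvalues_nonneg i)]
    conv_rhs => rw [hT.posSemidef.1.spectral_theorem]
    rw [hBdef, Unitary.conjStarAlgAut_apply]
    simp only [Matrix.mul_assoc]
    rw [← Matrix.mul_assoc (star (hT.posSemidef.1.eigenvectorUnitary : Matrix (Fin n) (Fin n) 𝕜)),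
      hUU, Matrix.one_mul, ← Matrix.mul_assoc _ _ (star _), hDD]
  have hdetA : A.det ≠ 0 := hA.det_pos.ne'
  have hdetT : (A.det • A⁻¹).det ≠ 0 := hT.det_pos.ne'
  have hdetB : B.det ≠ 0 := by
    intro h
    apply hdetT
    rw [← hBB, Matrix.det_mul, h, mul_zero]
  have hBinv : B⁻¹ * B = 1 := Matrix.nonsing_inv_mul B (Ne.isUnit hdetB)
  have hBinv' : B * B⁻¹ = 1 := Matrix.mul_nonsing_inv B (Ne.isUnit hdetB)
  have hcomp : ∀ (C D : Matrix (Fin n) (Fin n) 𝕜) (v : EuclideanSpace 𝕜 (Fin n)),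
      Matrix.toEuclideanLin C (Matrix.toEuclideanLin D v)
        = Matrix.toEuclideanLin (C * D) v := by
    intro C D v
    simp [Matrix.toEuclideanLin_apply, Matrix.mulVec_mulVec]
  have hone : ∀ v : EuclideanSpace 𝕜 (Fin n),
      Matrix.toEuclideanLin (1 : Matrix (Fin n) (Fin n) 𝕜) v = v := by
    intro v
    simp [Matrix.toEuclideanLin_apply, Matrix.one_mulVec]
  set S' : EuclideanSpace 𝕜 (Fin n) →ₗ[𝕜] EuclideanSpace 𝕜 (Fin n)
    := Matrix.toEuclideanLin B⁻¹ with hS'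
  set u : EuclideanSpace 𝕜 (Fin n) := S' x with hu
  have hSu : Slin u = x := by
    rw [hu, hS', hSlin, hcomp, hBinv', hone]
  have hu0 : u ≠ 0 := by
    intro h
    exact hx0 (by rw [← hSu, h, map_zero])
  have hsym : ∀ a b, ⟪Slin a, b⟫_𝕜 = ⟪a, Slin b⟫_𝕜 :=
    Matrix.isHermitian_iff_isSymmetric.1 hBherm
  have hsym' : ∀ a b, ⟪S' a, b⟫_𝕜 = ⟪a, S' b⟫_𝕜 :=
    Matrix.isHermitian_iff_isSymmetric.1 hBherm.inv
  have hLx : Lᗮ = 𝕜 ∙ x := by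
    have h1 : (𝕜 ∙ x) ≤ Lᗮ := (Submodule.span_singleton_le_iff_mem x Lᗮ).2 hx
    exact (Submodule.eq_of_le_of_finrank_eq h1
      (by rw [finrank_span_singleton hx0, hL])).symm
  have hMperp : Mᗮ = 𝕜 ∙ u := by
    ext y
    rw [Submodule.mem_orthogonal]
    constructor
    · intro h
      have hy : Slin y ∈ Lᗮ := by
        rw [Submodule.mem_orthogonal]
        intro l hl
        rw [← hsym l y]
        exact h _ (Submodule.mem_map_of_mem hl)
      rw [hLx] at hy
      rcases Submodule.mem_span_singleton.1 hy with ⟨c, hc⟩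
      refine Submodule.mem_span_singleton.2 ⟨c, ?_⟩
      have h2 := congrArg S' hc
      rw [map_smul] at h2
      have hy' : S' (Slin y) = y := by rw [hS', hSlin, hcomp, hBinv, hone]
      rw [hy'] at h2
      exact h2
    · intro hy v hv
      rcases Submodule.mem_span_singleton.1 hy with ⟨c, hc⟩
      rcases Submodule.mem_map.1 hv with ⟨l, hl, rfl⟩
      rw [← hc, inner_smul_right, hsym l, hSu,
        (Submodule.mem_orthogonal L x).1 hx l hl, mul_zero]
  have hproj : ∀ (K : Submodule 𝕜 (EuclideanSpace 𝕜 (Fin n))) (_ : K = 𝕜 ∙ u)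
      [K.HasOrthogonalProjection], K.starProjection (Slin x) = (𝕜 ∙ u).starProjection (Slin x) := by
    intro K hK _
    subst hK
    rfl
  rw [Submodule.coe_orthogonalProjectionOnto_apply, hproj _ hMperp, Submodule.starProjection_singleton]
  have hc : ⟪u, Slin x⟫_𝕜 = (‖x‖ : 𝕜) ^ 2 := by
    rw [← hsym u x, hSu, inner_self_eq_norm_sq_to_K]
  have huu : ⟪u, u⟫_𝕜 = (A.det)⁻¹ * ⟪x, Matrix.toEuclideanLin A x⟫_𝕜 := by
    have hTinv : (B⁻¹ * B⁻¹ : Matrix (Fin n) (Fin n) 𝕜) = (A.det)⁻¹ • A := by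
      rw [← Matrix.mul_inv_rev, hBB]
      apply Matrix.inv_eq_right_inv
      rw [Matrix.smul_mul, Matrix.mul_smul, smul_smul, mul_inv_cancel₀ hdetA,
        Matrix.nonsing_inv_mul A (Ne.isUnit hdetA), one_smul]
    calc ⟪u, u⟫_𝕜 = ⟪x, S' (S' x)⟫_𝕜 := hsym' x (S' x)
      _ = ⟪x, Matrix.toEuclideanLin ((A.det)⁻¹ • A) x⟫_𝕜 := by
          rw [hS', hcomp, hTinv]
      _ = (A.det)⁻¹ * ⟪x, Matrix.toEuclideanLin A x⟫_𝕜 := by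
          rw [map_smul]
          simp [inner_smul_right]
  have hnu : ((‖u‖ ^ 2 : ℝ) : 𝕜) = ⟪u, u⟫_𝕜 := by
    rw [inner_self_eq_norm_sq_to_K]
    push_cast
    ring
  have hp : ⟪x, Matrix.toEuclideanLin A x⟫_𝕜 = A.det * ((‖u‖ ^ 2 : ℝ) : 𝕜) := by
    rw [hnu, huu]
    field_simp
  have hnorm : ‖(⟪u, Slin x⟫_𝕜 / ((‖u‖ ^ 2 : ℝ) : 𝕜)) • u‖
      = ‖x‖ ^ 2 / ‖u‖ ^ 2 * ‖u‖ := by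
    rw [norm_smul, norm_div, hc]
    congr 2
    · rw [norm_pow, RCLike.norm_ofReal, abs_of_nonneg (norm_nonneg x)]
    · rw [RCLike.norm_ofReal, abs_of_nonneg (by positivity)]
  rw [hnorm, hp]
  have hnu0 : (‖u‖ : ℝ) ≠ 0 := norm_ne_zero_iff.2 hu0
  have hnx0 : (‖x‖ : ℝ) ≠ 0 := norm_ne_zero_iff.2 hx0
  have hnu0' : ((‖u‖ : ℝ) : 𝕜) ≠ 0 := by exact_mod_cast hnu0
  have hnx0' : ((‖x‖ : ℝ) : 𝕜) ≠ 0 := by exact_mod_cast hnx0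
  push_cast
  field_simp
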